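/- Let A and K be n×n real matrices and m a positive integer. Then the characteristic polynomial of the mn×mn matrix rQK(A,K) equals the product of the characteristic polynomial of A + m·K with the (m−1)-st power of the characteristic polynomial of A. Consequently the eigenvalues of rQK(A,K), counted with multiplicity, are the eigenvalues of A + m·K together with m−1 copies of the eigenvalues of A. -/
import Mathlib

open Matrix Kronecker Polynomial Finset

/-- The restricted quasi-Kronecker matrix `rQK(A, K) = I_m ⊗ A + (e eᵗ) ⊗ K`. -/
noncomputable def rQK {n : ℕ} (m : ℕ) (A K : Matrix (Fin n) (Fin n) ℝ) :
    Matrix (Fin m × Fin n) (Fin m × Fin n) ℝ :=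
  (1 : Matrix (Fin m) (Fin m) ℝ) ⊗ₖ A + (Matrix.of fun _ _ => (1 : ℝ)) ⊗ₖ K

section aux

lemma charpoly_conj_aux {ι : Type*} [Fintype ι] [DecidableEq ι] (P Q M : Matrix ι ι ℝ)
    (h1 : P * Q = 1) : (P * M * Q).charpoly = M.charpoly := by
  have hmap : ∀ X Y : Matrix ι ι ℝ,
      (X * Y).map (C : ℝ → ℝ[X]) = X.map C * Y.map C := fun X Y =>
    Matrix.map_mul (f := (C : ℝ →+* ℝ[X]))
  have hone : (1 : Matrix ι ι ℝ).map (C : ℝ → ℝ[X]) = 1 :=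
    Matrix.map_one _ (map_zero C) (map_one C)
  have key : charmatrix (P * M * Q) = P.map C * charmatrix M * Q.map C := by
    rw [charmatrix, charmatrix, mul_sub, sub_mul]
    congr 1
    · rw [← (scalar_commute (n := ι) (X : ℝ[X]) (Commute.all _) (P.map C)).eq,
        mul_assoc, ← hmap, h1, hone, mul_one]
    · simp only [RingHom.mapMatrix_apply, hmap]
  have hdet : (P.map (C : ℝ → ℝ[X])).det * (Q.map C).det = 1 := by
    rw [← det_mul, ← hmap, h1, hone, det_one]
  rw [Matrix.charpoly, Matrix.charpoly, key, det_mul, det_mul]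
  calc (P.map (C : ℝ → ℝ[X])).det * M.charmatrix.det * (Q.map C).det
      = (P.map (C : ℝ → ℝ[X])).det * (Q.map C).det * M.charmatrix.det := by ring
    _ = M.charmatrix.det := by rw [hdet, one_mul]

variable (m : ℕ)

/-- the vector `u = e - δ₀`. -/
noncomputable def uVec : Fin (m + 1) → ℝ := fun j => if j = 0 then 0 else 1

/-- rank-one nilpotent `u δ₀ᵗ`. -/
noncomputable def Nmat : Matrix (Fin (m + 1)) (Fin (m + 1)) ℝ :=
  vecMulVec (uVec m) (Pi.single 0 1)

noncomputable def Pmat : Matrix (Fin (m + 1)) (Fin (m + 1)) ℝ := 1 + Nmat m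
noncomputable def Qmat : Matrix (Fin (m + 1)) (Fin (m + 1)) ℝ := 1 - Nmat m

/-- the all-ones matrix. -/
noncomputable def Jmat : Matrix (Fin (m + 1)) (Fin (m + 1)) ℝ :=
  Matrix.of fun _ _ => (1 : ℝ)

/-- the triangular form of `J = e eᵗ` after conjugation. -/
noncomputable def Tmat : Matrix (Fin (m + 1)) (Fin (m + 1)) ℝ :=
  Matrix.of fun i j => (if i = 0 then 1 else 0) * (if j = 0 then (m + 1 : ℝ) else 1)

lemma Nmat_sq : Nmat m * Nmat m = 0 := by
  ext i j
  simp only [Nmat, Matrix.mul_apply, vecMulVec_apply, Matrix.zero_apply]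
  refine Finset.sum_eq_zero fun k _ => ?_
  rcases eq_or_ne k 0 with h | h
  · simp [h, uVec]
  · simp [Pi.single_apply, h]

lemma Pmat_mul_Qmat : Pmat m * Qmat m = 1 := by
  have : Pmat m * Qmat m = 1 - Nmat m * Nmat m := by unfold Pmat Qmat; noncomm_ring
  rw [this, Nmat_sq, sub_zero]

lemma Qmat_rowSum (i : Fin (m + 1)) :
    ∑ k, Qmat m i k = if i = 0 then 1 else 0 := by
  simp only [Qmat, Nmat, Matrix.sub_apply, Matrix.one_apply, vecMulVec_apply,
    Finset.sum_sub_distrib, Finset.sum_ite_eq, Finset.mem_univ, if_true]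
  rcases eq_or_ne i 0 with h | h
  · simp [h, uVec, Pi.single_apply]
  · simp [h, uVec, Pi.single_apply]

lemma Pmat_colSum (j : Fin (m + 1)) :
    ∑ l, Pmat m l j = if j = 0 then (m + 1 : ℝ) else 1 := by
  simp only [Pmat, Nmat, Matrix.add_apply, Matrix.one_apply, vecMulVec_apply,
    Finset.sum_add_distrib, Finset.sum_ite_eq', Finset.mem_univ, if_true]
  have hsum : ∑ l : Fin (m + 1), uVec m l = m := by
    have : ∀ l : Fin (m + 1), uVec m l = 1 - (if l = 0 then (1 : ℝ) else 0) := by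
      intro l; rcases eq_or_ne l 0 with h | h <;> simp [uVec, h]
    simp [this, Finset.sum_sub_distrib]
  rcases eq_or_ne j 0 with h | h
  · simp [h, Pi.single_apply, ← Finset.sum_mul, hsum]; ring
  · simp [h, Pi.single_apply, ← Finset.sum_mul, hsum]

lemma Qmat_J_Pmat : Qmat m * Jmat m * Pmat m = Tmat m := by
  ext i j
  have h1 : ∀ l, (Qmat m * Jmat m) i l = ∑ k, Qmat m i k := by
    intro l; simp [Matrix.mul_apply, Jmat]
  simp only [Matrix.mul_apply (M := Qmat m * Jmat m)]
  calc ∑ l, (Qmat m * Jmat m) i l * Pmat m l j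
      = ∑ l, (∑ k, Qmat m i k) * Pmat m l j := by
        exact Finset.sum_congr rfl fun l _ => by rw [h1]
    _ = (∑ k, Qmat m i k) * ∑ l, Pmat m l j := by rw [Finset.mul_sum]
    _ = Tmat m i j := by rw [Qmat_rowSum, Pmat_colSum]; rfl

end aux

theorem rQK_charpoly (n m : ℕ) (hm : 0 < m) (A K : Matrix (Fin n) (Fin n) ℝ) :
    (rQK m A K).charpoly = (A + (m : ℝ) • K).charpoly * A.charpoly ^ (m - 1) ∧
      (rQK m A K).charpoly.roots =
        (A + (m : ℝ) • K).charpoly.roots + (m - 1) • A.charpoly.roots := by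
  obtain ⟨m, rfl⟩ := Nat.exists_eq_succ_of_ne_zero hm.ne'
  set T := Tmat m with hT
  set NBig : Matrix (Fin (m+1) × Fin n) (Fin (m+1) × Fin n) ℝ :=
    (1 : Matrix (Fin (m+1)) (Fin (m+1)) ℝ) ⊗ₖ A + T ⊗ₖ K with hNBig
  have hPQ := Pmat_mul_Qmat m
  have hPTQ : Pmat m * T * Qmat m = Jmat m := by
    rw [hT, ← Qmat_J_Pmat m]
    calc Pmat m * (Qmat m * Jmat m * Pmat m) * Qmat m
        = (Pmat m * Qmat m) * Jmat m * (Pmat m * Qmat m) := by noncomm_ring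
      _ = Jmat m := by rw [hPQ, one_mul, mul_one]
  have hconj : rQK (m+1) A K = (Pmat m ⊗ₖ (1 : Matrix (Fin n) (Fin n) ℝ)) * NBig *
      (Qmat m ⊗ₖ (1 : Matrix (Fin n) (Fin n) ℝ)) := by
    rw [hNBig, Matrix.mul_add, Matrix.add_mul, ← Matrix.mul_kronecker_mul,
      ← Matrix.mul_kronecker_mul, ← Matrix.mul_kronecker_mul, ← Matrix.mul_kronecker_mul]
    simp only [Matrix.one_mul, Matrix.mul_one]
    rw [hPQ, hPTQ, rQK, Jmat]
  have hPQbig : (Pmat m ⊗ₖ (1 : Matrix (Fin n) (Fin n) ℝ)) *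
      (Qmat m ⊗ₖ (1 : Matrix (Fin n) (Fin n) ℝ)) = 1 := by
    rw [← Matrix.mul_kronecker_mul, hPQ, mul_one, Matrix.one_kronecker_one]
  have hcp : (rQK (m+1) A K).charpoly = NBig.charpoly := by
    rw [hconj]; exact charpoly_conj_aux _ _ _ hPQbig
  have hbt : NBig.BlockTriangular Prod.fst := by
    intro p q hpq
    have h1 : p.1 ≠ q.1 := (ne_of_gt hpq)
    have h2 : p.1 ≠ 0 := by
      intro h; rw [h] at hpq; exact Fin.not_lt_zero _ hpq
    simp [hNBig, Matrix.kroneckerMap_apply, Matrix.one_apply_ne h1, hT, Tmat, h2]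
  have hblock : ∀ a : Fin (m+1),
      (NBig.toSquareBlock Prod.fst a).charpoly = (A + (T a a) • K).charpoly := by
    intro a
    let e : Fin n ≃ {p : Fin (m+1) × Fin n // p.1 = a} :=
      { toFun := fun k => ⟨(a, k), rfl⟩
        invFun := fun p => p.1.2
        left_inv := fun k => rfl
        right_inv := fun p => by
          rcases p with ⟨⟨i, k⟩, h⟩; simp only at h; subst h; rfl }
    have heq : NBig.toSquareBlock Prod.fst a = reindex e e (A + (T a a) • K) := by
      ext p q
      rcases p with ⟨⟨i, k⟩, hi⟩; rcases q with ⟨⟨j, l⟩, hj⟩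
      simp only at hi hj
      subst hi; subst hj
      simp [Matrix.toSquareBlock_def, hNBig, Matrix.kroneckerMap_apply, e,
        Matrix.one_apply, mul_comm]
    rw [heq, Matrix.charpoly_reindex]
  have hdiag : ∀ a : Fin (m+1), T a a = if a = 0 then (((m+1 : ℕ)) : ℝ) else 0 := by
    intro a
    rcases eq_or_ne a 0 with h | h
    · simp [hT, Tmat, h]
    · simp [hT, Tmat, h]
  have hmain : (rQK (m+1) A K).charpoly =
      (A + ((m+1 : ℕ) : ℝ) • K).charpoly * A.charpoly ^ m := by
    rw [hcp, Matrix.charpoly, hbt.charmatrix.det_fintype]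
    have hfac : ∀ a : Fin (m+1), (NBig.charmatrix.toSquareBlock Prod.fst a).det =
        (A + (if a = 0 then ((m+1 : ℕ) : ℝ) else 0) • K).charpoly := by
      intro a
      rw [← Matrix.charmatrix_toSquareBlock, ← Matrix.charpoly, hblock a, hdiag a]
    rw [Finset.prod_congr rfl fun a _ => hfac a, Fin.prod_univ_succ]
    simp [Fin.succ_ne_zero]
  refine ⟨by simpa using hmain, ?_⟩
  rw [hmain]
  have hne : (A + ((m+1 : ℕ) : ℝ) • K).charpoly * A.charpoly ^ m ≠ 0 :=
    ((Matrix.charpoly_monic _).mul ((Matrix.charpoly_monic _).pow _)).ne_zero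
  rw [roots_mul hne, roots_pow]
  simp
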